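/- Let p(x) be an odd polynomial of degree at most d (so p(x) = x·q(x²) for a polynomial q) with |p(x)| ≤ 1 for x ∈ [−1,1]. Then max_{x∈[0,1]} |q(x)| = O(d). -/

import Mathlib

open Polynomial

noncomputable section Stmt16Aux

namespace Stmt16

open Complex Finset

/-- Riesz interpolation nodes. -/
def tt (n k : ℕ) : ℝ := (2 * (k:ℝ) - 1) * Real.pi / (2 * n)

/-- Riesz weights. -/
def ww (n k : ℕ) : ℝ := 1 / (Real.sin (tt n k / 2))^2

def SS (n : ℕ) : ℝ := ∑ k ∈ Icc 1 (2*n), ww n k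

def CC (n : ℕ) (m : ℤ) : ℂ :=
  ∑ k ∈ Icc 1 (2*n), (-1)^(k+1) * (ww n k : ℂ) * Complex.exp (Complex.I * m * tt n k)

lemma tt_half_mem (n k : ℕ) (hn : 1 ≤ n) (hk : k ∈ Icc 1 (2*n)) :
    0 < tt n k / 2 ∧ tt n k / 2 < Real.pi := by
  simp only [Finset.mem_Icc] at hk
  have hπ := Real.pi_pos
  have hk1 : (1:ℝ) ≤ (k:ℝ) := by exact_mod_cast hk.1
  have hk2 : (k:ℝ) ≤ 2*(n:ℝ) := by exact_mod_cast hk.2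
  have hn1 : (1:ℝ) ≤ (n:ℝ) := by exact_mod_cast hn
  have h0 : (0:ℝ) < 2*(n:ℝ) := by linarith
  unfold tt
  constructor
  · apply div_pos (div_pos (by nlinarith) h0) two_pos
  · rw [div_div, div_lt_iff₀ (by linarith)]
    nlinarith

lemma sin_half_pos (n k : ℕ) (hn : 1 ≤ n) (hk : k ∈ Icc 1 (2*n)) :
    0 < Real.sin (tt n k / 2) := by
  obtain ⟨h1, h2⟩ := tt_half_mem n k hn hk
  exact Real.sin_pos_of_pos_of_lt_pi h1 h2

lemma ww_pos (n k : ℕ) (hn : 1 ≤ n) (hk : k ∈ Icc 1 (2*n)) : 0 < ww n k := by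
  have := sin_half_pos n k hn hk
  unfold ww; positivity

lemma SS_pos (n : ℕ) (hn : 1 ≤ n) : 0 < SS n := by
  apply Finset.sum_pos (fun k hk => ww_pos n k hn hk)
  exact ⟨1, by simp; omega⟩

/-- Geometric sum lemma. -/
lemma geo (n : ℕ) (hn : 1 ≤ n) (m : ℤ) (hm : |m| < n) :
    ∑ k ∈ Icc 1 (2*n), (-1:ℂ)^(k+1) * Complex.exp (Complex.I * m * tt n k) = 0 := by
  have hπ := Real.pi_pos
  have hnR : ((n:ℂ)) ≠ 0 := by
    exact_mod_cast Nat.cast_ne_zero.mpr (by omega)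
  set r : ℂ := -Complex.exp (Complex.I * m * ((Real.pi : ℂ) / n)) with hr
  have hterm : ∀ k : ℕ, (-1:ℂ)^(k+1) * Complex.exp (Complex.I * m * tt n k)
      = -Complex.exp (-(Complex.I * m * ((Real.pi:ℂ) / (2*n)))) * r^k := by
    intro k
    have h1 : Complex.I * m * ((tt n k : ℝ) : ℂ)
        = (k:ℂ) * (Complex.I * m * ((Real.pi:ℂ)/n)) + (-(Complex.I * m * ((Real.pi:ℂ)/(2*n)))) := by
      unfold tt
      push_cast
      field_simp
      ring
    rw [h1, Complex.exp_add, Complex.exp_nat_mul, hr, neg_pow]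
    ring
  rw [Finset.sum_congr rfl (fun k _ => hterm k), ← Finset.mul_sum]
  have hrpow : r^(2*n) = 1 := by
    rw [hr, neg_pow, ← Complex.exp_nat_mul]
    have : ((2*n : ℕ):ℂ) * (Complex.I * m * ((Real.pi:ℂ)/n)) = (m:ℂ) * (2 * (Real.pi:ℂ) * Complex.I) := by
      push_cast
      field_simp
    rw [this, Complex.exp_int_mul_two_pi_mul_I]
    simp [pow_mul]
  have hrne : r ≠ 1 := by
    intro h
    have hsq : Complex.exp (Complex.I * m * ((Real.pi:ℂ)/n)) ^ 2 = 1 := by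
      have : Complex.exp (Complex.I * m * ((Real.pi:ℂ)/n)) = -1 := by
        rw [← neg_neg (Complex.exp _), ← hr, h]
      rw [this]; ring
    rw [← Complex.exp_nat_mul, Complex.exp_eq_one_iff] at hsq
    obtain ⟨j, hj⟩ := hsq
    have hπC : ((Real.pi:ℂ)) ≠ 0 := by exact_mod_cast Real.pi_ne_zero
    have hmj : (m:ℂ) = (j:ℂ) * n := by
      field_simp at hj
      have h2 : (2:ℂ) * Complex.I * (Real.pi:ℂ) ≠ 0 := by
        simp [Complex.I_ne_zero, hπC]
      apply mul_left_cancel₀ h2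
      linear_combination (Complex.I * (Real.pi:ℂ)) * hj
    have hmz : m = j * n := by exact_mod_cast hmj
    have hj0 : j = 0 := by
      rcases eq_or_ne j 0 with h0 | h0
      · exact h0
      · exfalso
        have : (n:ℤ) ≤ |m| := by
          rw [hmz, abs_mul, Int.abs_natCast]
          nlinarith [Int.one_le_abs h0, (by positivity : (0:ℤ) ≤ (n:ℤ))]
        omega
    have hm0 : m = 0 := by simp [hmz, hj0]
    rw [hm0] at hr
    simp at hr
    rw [hr] at h
    norm_num at h
  have hsum : ∑ k ∈ Icc 1 (2*n), r^k = 0 := by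
    rw [← Finset.Ico_add_one_right_eq_Icc, geom_sum_Ico hrne (by omega)]
    have h21 : r^(2*n+1) = r := by rw [pow_succ, hrpow, one_mul]
    rw [h21, pow_one, sub_self, zero_div]
  rw [hsum, mul_zero]

/-- Second difference recurrence. -/
lemma CC_rec (n : ℕ) (hn : 1 ≤ n) (m : ℤ) (hm : |m| < n) :
    CC n (m+1) + CC n (m-1) = 2 * CC n m := by
  have key : ∀ k ∈ Icc 1 (2*n),
      ((-1:ℂ)^(k+1) * (ww n k : ℂ) * Complex.exp (Complex.I * (((m+1) : ℤ):ℂ) * tt n k)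
      + (-1:ℂ)^(k+1) * (ww n k : ℂ) * Complex.exp (Complex.I * (((m-1) : ℤ):ℂ) * tt n k))
      - 2 * ((-1:ℂ)^(k+1) * (ww n k : ℂ) * Complex.exp (Complex.I * (m:ℂ) * tt n k))
      = -4 * ((-1:ℂ)^(k+1) * Complex.exp (Complex.I * (m:ℂ) * tt n k)) := by
    intro k hk
    have hs := sin_half_pos n k hn hk
    have hcos : Real.cos (tt n k) = 1 - 2 * (Real.sin (tt n k / 2))^2 := by
      have h2 : tt n k = 2 * (tt n k / 2) := by ring
      conv_lhs => rw [h2, Real.cos_two_mul']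
      nlinarith [Real.sin_sq_add_cos_sq (tt n k / 2)]
    have hw : (ww n k : ℝ) * (2 * Real.cos (tt n k) - 2) = -4 := by
      unfold ww
      rw [hcos]
      field_simp
      ring
    have e1 : Complex.I * (((m+1) : ℤ):ℂ) * tt n k
        = Complex.I * (m:ℂ) * tt n k + Complex.I * tt n k := by push_cast; ring
    have e2 : Complex.I * (((m-1) : ℤ):ℂ) * tt n k
        = Complex.I * (m:ℂ) * tt n k + (-(Complex.I * tt n k)) := by push_cast; ring
    rw [e1, e2, Complex.exp_add, Complex.exp_add]
    have hzc : Complex.exp (Complex.I * tt n k) + Complex.exp (-(Complex.I * tt n k))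
        = 2 * (Real.cos (tt n k) : ℂ) := by
      rw [Complex.ofReal_cos, Complex.cos]
      field_simp
    have hwc : (ww n k : ℂ) * (2 * (Real.cos (tt n k) : ℂ) - 2) = -4 := by
      exact_mod_cast congrArg (Complex.ofReal) hw
    calc ((-1:ℂ)^(k+1) * (ww n k : ℂ) * (Complex.exp (Complex.I * (m:ℂ) * tt n k) * Complex.exp (Complex.I * tt n k))
          + (-1:ℂ)^(k+1) * (ww n k : ℂ) * (Complex.exp (Complex.I * (m:ℂ) * tt n k) * Complex.exp (-(Complex.I * tt n k))))
          - 2 * ((-1:ℂ)^(k+1) * (ww n k : ℂ) * Complex.exp (Complex.I * (m:ℂ) * tt n k))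
        = (-1:ℂ)^(k+1) * Complex.exp (Complex.I * (m:ℂ) * tt n k)
            * ((ww n k : ℂ) * ((Complex.exp (Complex.I * tt n k) + Complex.exp (-(Complex.I * tt n k))) - 2)) := by
          ring
      _ = -4 * ((-1:ℂ)^(k+1) * Complex.exp (Complex.I * (m:ℂ) * tt n k)) := by
          rw [hzc]
          rw [show (ww n k : ℂ) * (2 * (Real.cos (tt n k) : ℂ) - 2) = -4 from hwc]  -- may need mul_sub
          ring
  have hsum := Finset.sum_congr rfl key
  rw [Finset.sum_sub_distrib, Finset.sum_add_distrib] at hsum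
  unfold CC
  have hgeo := geo n hn m hm
  have : ∑ k ∈ Icc 1 (2*n), (-4:ℂ) * ((-1:ℂ)^(k+1) * Complex.exp (Complex.I * (m:ℂ) * tt n k)) = 0 := by
    rw [← Finset.mul_sum, hgeo, mul_zero]
  rw [this, ← Finset.mul_sum] at hsum
  unfold CC at *
  linear_combination hsum

lemma CC_zero (n : ℕ) : CC n 0 = 0 := by
  unfold CC
  apply Finset.sum_involution (fun k _ => 2*n+1-k)
  · intro k hk
    simp only [Finset.mem_Icc] at hk
    have hk2 : k ≤ 2*n+1 := by omega
    have hww : ww n (2*n+1-k) = ww n k := by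
      unfold ww tt
      have hcast : ((2*n+1-k : ℕ) : ℝ) = 2*(n:ℝ)+1-(k:ℝ) := by
        push_cast [Nat.cast_sub hk2]
        ring
      have harg : (2*(2*(n:ℝ)+1-(k:ℝ))-1) * Real.pi / (2*n) / 2
          = Real.pi - (2*(k:ℝ)-1) * Real.pi / (2*n) / 2 := by
        have hn0 : (n:ℝ) ≠ 0 := by
          have : 1 ≤ k := hk.1
          have : k ≤ 2*n := hk.2
          have : 1 ≤ n := by omega
          exact_mod_cast Nat.one_le_iff_ne_zero.mp this
        field_simp
        ring
      rw [hcast, harg, Real.sin_pi_sub]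
    rw [hww]
    have hsgn : ((-1:ℂ))^(2*n+1-k+1) = -(-1:ℂ)^(k+1) := by
      have hpar : (2*n+1-k+1) % 2 = (k % 2) := by omega
      rcases Nat.even_or_odd k with he | ho
      · have h1 : Even (2*n+1-k+1) := by
          rw [Nat.even_iff] at he ⊢
          omega
        have h2 : Odd (k+1) := by
          rw [Nat.odd_iff, Nat.even_iff] at *
          omega
        rw [h1.neg_one_pow, h2.neg_one_pow]
        norm_num
      · have h1 : Odd (2*n+1-k+1) := by
          rw [Nat.odd_iff] at ho ⊢
          omega
        have h2 : Even (k+1) := by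
          rw [Nat.even_iff] ; rw [Nat.odd_iff] at ho
          omega
        rw [h1.neg_one_pow, h2.neg_one_pow]
    rw [hsgn]
    simp
  · intro k hk hne
    simp only [Finset.mem_Icc] at hk
    omega
  · intro k hk
    simp only [Finset.mem_Icc] at hk ⊢
    omega
  · intro k hk
    simp only [Finset.mem_Icc] at hk
    omega

lemma CC_n (n : ℕ) (hn : 1 ≤ n) : CC n n = Complex.I * SS n := by
  unfold CC
  have key : ∀ k ∈ Icc 1 (2*n),
      (-1:ℂ)^(k+1) * (ww n k : ℂ) * Complex.exp (Complex.I * ((n:ℤ):ℂ) * tt n k)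
      = Complex.I * (ww n k : ℂ) := by
    intro k hk
    simp only [Finset.mem_Icc] at hk
    have hn0 : (n:ℝ) ≠ 0 := by exact_mod_cast Nat.one_le_iff_ne_zero.mp hn
    have hn0C : (n:ℂ) ≠ 0 := by exact_mod_cast hn0
    have harg : Complex.I * ((n:ℤ):ℂ) * ((tt n k : ℝ) : ℂ)
        = ((2*(k:ℕ)-1 : ℕ):ℂ) * (((Real.pi/2 : ℝ):ℂ) * Complex.I) := by
      unfold tt
      have hk1 : 1 ≤ k := hk.1
      push_cast [Nat.cast_sub (by omega : 1 ≤ 2*k)]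
      field_simp
    rw [harg, Complex.exp_nat_mul]
    have hIpow : Complex.exp (((Real.pi/2:ℝ):ℂ) * Complex.I) = Complex.I := by
      rw [Complex.exp_mul_I, ← Complex.ofReal_cos, ← Complex.ofReal_sin,
        Real.cos_pi_div_two, Real.sin_pi_div_two]
      simp
    rw [hIpow]
    have hI2 : Complex.I^(2*k-1) = (-1:ℂ)^(k-1) * Complex.I := by
      rw [show 2*k-1 = 2*(k-1)+1 by omega, pow_succ, pow_mul, Complex.I_sq]
    rw [hI2]
    have hpow : ((-1:ℂ))^(k+1) * ((-1:ℂ))^(k-1) = 1 := by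
      rw [← pow_add, show k+1+(k-1) = 2*k by omega, pow_mul]
      norm_num
    linear_combination ((ww n k : ℂ) * Complex.I) * hpow
  rw [Finset.sum_congr rfl key, ← Finset.mul_sum]
  unfold SS
  push_cast
  rfl

lemma CC_conj (n : ℕ) (m : ℤ) : CC n (-m) = (starRingEnd ℂ) (CC n m) := by
  unfold CC
  rw [map_sum]
  apply Finset.sum_congr rfl
  intro k _
  rw [map_mul, map_mul, map_pow, ← Complex.exp_conj, map_mul, map_mul,
    Complex.conj_I, Complex.conj_ofReal, Complex.conj_ofReal]
  rw [show (starRingEnd ℂ) ((-1:ℂ)) = -1 by simp]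
  rw [show (starRingEnd ℂ) ((m:ℤ):ℂ) = ((m:ℤ):ℂ) by simp]
  push_cast
  ring_nf

lemma CC_nat (n : ℕ) (hn : 1 ≤ n) : ∀ j : ℕ, j ≤ n → CC n (j:ℤ) = (j:ℂ) * CC n 1 := by
  intro j
  induction j using Nat.strong_induction_on with
  | _ j ih =>
    intro hj
    match j with
    | 0 => simpa using CC_zero n
    | 1 => simp
    | (j+2) =>
      have h1 := ih (j+1) (by omega) (by omega)
      have h0 := ih j (by omega) (by omega)
      have habs : |((j:ℤ)+1)| < (n:ℤ) := by
        rw [_root_.abs_of_nonneg (by positivity)]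
        omega
      have hrec := CC_rec n hn ((j:ℤ)+1) habs
      rw [show ((j:ℤ)+1+1) = (((j+2 : ℕ)):ℤ) by push_cast; ring,
        show ((j:ℤ)+1-1) = ((j:ℕ):ℤ) by push_cast; ring,
        show ((j:ℤ)+1) = (((j+1 : ℕ)):ℤ) by push_cast; ring] at hrec
      rw [h1, h0] at hrec
      push_cast
      push_cast at hrec
      linear_combination hrec

lemma CC_eq (n : ℕ) (hn : 1 ≤ n) (m : ℤ) (hm : |m| ≤ n) :
    CC n m = Complex.I * m * SS n / n := by
  have hn0 : (n:ℂ) ≠ 0 := by exact_mod_cast Nat.cast_ne_zero.mpr (by omega)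
  have hC1 : CC n 1 = Complex.I * SS n / n := by
    have h := CC_nat n hn n le_rfl
    rw [CC_n n hn] at h
    field_simp
    linear_combination -h
  have hpos : ∀ m' : ℤ, 0 ≤ m' → m' ≤ n → CC n m' = Complex.I * m' * SS n / n := by
    intro m' h0 h1
    obtain ⟨j, rfl⟩ : ∃ j : ℕ, m' = j := ⟨m'.toNat, (Int.toNat_of_nonneg h0).symm⟩
    have hj : j ≤ n := by exact_mod_cast h1
    rw [CC_nat n hn j hj, hC1]
    push_cast
    ring
  rcases le_or_gt 0 m with h0 | h0
  · exact hpos m h0 (by rwa [abs_of_nonneg h0] at hm)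
  · have h1 : CC n m = (starRingEnd ℂ) (CC n (-m)) := by
      rw [← CC_conj n (-m), neg_neg]
    rw [h1, hpos (-m) (by omega) (by rwa [abs_of_neg h0] at hm)]
    rw [map_div₀, map_mul, map_mul, Complex.conj_I]
    simp [Complex.conj_ofReal]

/-- Bernstein-type inequality, derived from the Riesz-type identity. -/
lemma bern (p : ℝ[X]) (hn : 1 ≤ p.natDegree)
    (hb : ∀ y ∈ Set.Icc (-1:ℝ) 1, |p.eval y| ≤ 1) :
    ∀ φ : ℝ, 0 ≤ φ → |p.eval (Real.sin φ) - p.eval 0| ≤ p.natDegree * φ := by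
  set n := p.natDegree with hndef
  set Q : Polynomial ℂ := ∑ j ∈ Finset.range (n+1),
      Polynomial.C ((p.coeff j : ℂ) / (2*Complex.I)^j) * (Polynomial.X^2 - 1)^j
        * Polynomial.X^(n - j) with hQdef
  have hQdeg : Q.natDegree ≤ 2*n := by
    apply Polynomial.natDegree_sum_le_of_forall_le
    intro j hj
    simp only [Finset.mem_range] at hj
    calc (Polynomial.C ((p.coeff j : ℂ) / (2*Complex.I)^j) * (Polynomial.X^2 - 1)^j
            * Polynomial.X^(n - j)).natDegree
        ≤ (Polynomial.C ((p.coeff j : ℂ) / (2*Complex.I)^j) * (Polynomial.X^2 - 1)^j).natDegree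
          + (Polynomial.X^(n-j) : Polynomial ℂ).natDegree := Polynomial.natDegree_mul_le
      _ ≤ ((Polynomial.C ((p.coeff j : ℂ) / (2*Complex.I)^j)).natDegree
          + ((Polynomial.X^2 - 1 : Polynomial ℂ)^j).natDegree) + (n - j) := by
          gcongr
          · exact Polynomial.natDegree_mul_le
          · exact (Polynomial.natDegree_X_pow _).le
      _ ≤ (0 + 2*j) + (n-j) := by
          gcongr
          · exact (Polynomial.natDegree_C _).le
          · calc ((Polynomial.X^2 - 1 : Polynomial ℂ)^j).natDegree
                ≤ j * (Polynomial.X^2 - 1 : Polynomial ℂ).natDegree :=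
                  Polynomial.natDegree_pow_le
              _ ≤ 2*j := by
                  have : (Polynomial.X^2 - 1 : Polynomial ℂ).natDegree ≤ 2 := by
                    apply le_trans (Polynomial.natDegree_sub_le _ _)
                    simp [Polynomial.natDegree_X_pow]
                  nlinarith
      _ ≤ 2*n := by omega
  have hQeval : ∀ φ : ℝ, Q.eval (Complex.exp (Complex.I * φ))
      = Complex.exp (Complex.I * n * φ) * ((p.eval (Real.sin φ) : ℝ) : ℂ) := by
    intro φ
    set z := Complex.exp (Complex.I * φ) with hzdef
    have hsin2 : Complex.exp (Complex.I * φ) - Complex.exp (-(Complex.I * φ))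
        = 2*Complex.I*((Real.sin φ : ℝ):ℂ) := by
      rw [mul_comm Complex.I (φ:ℂ), ← neg_mul, Complex.exp_mul_I, Complex.exp_mul_I]
      rw [Complex.cos_neg, Complex.sin_neg, Complex.ofReal_sin]
      ring
    have e1 : z * Complex.exp (-(Complex.I*φ)) = 1 := by
      rw [hzdef, ← Complex.exp_add]
      simp
    have hz : z^2 - 1 = z * (2 * Complex.I * ((Real.sin φ : ℝ):ℂ)) := by
      calc z^2 - 1 = z * (Complex.exp (Complex.I*φ) - Complex.exp (-(Complex.I*φ))) := by
            rw [mul_sub, e1, ← hzdef, sq]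
        _ = z * (2 * Complex.I * ((Real.sin φ : ℝ):ℂ)) := by rw [hsin2]
    have hzn : z^n = Complex.exp (Complex.I * n * φ) := by
      rw [hzdef, ← Complex.exp_nat_mul]
      congr 1
      push_cast
      ring
    have hpe : ((p.eval (Real.sin φ) : ℝ):ℂ)
        = ∑ j ∈ Finset.range (n+1), (p.coeff j : ℂ) * ((Real.sin φ:ℝ):ℂ)^j := by
      rw [Polynomial.eval_eq_sum_range]
      push_cast
      rfl
    rw [hQdef, Polynomial.eval_finset_sum, hpe, Finset.mul_sum]
    apply Finset.sum_congr rfl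
    intro j hj
    simp only [Finset.mem_range] at hj
    have hjn : j ≤ n := by omega
    simp only [Polynomial.eval_mul, Polynomial.eval_pow, Polynomial.eval_C, Polynomial.eval_X,
      Polynomial.eval_sub, Polynomial.eval_one, Polynomial.eval_ofNat]
    rw [hz, mul_pow]
    have h2I : ((2*Complex.I) : ℂ) ≠ 0 := by simp [Complex.I_ne_zero]
    have hzz : z^j * z^(n-j) = z^n := by
      rw [← pow_add]
      congr 1
      omega
    field_simp
    rw [← hzn, ← hzz]
    ring
  set G : ℝ → ℂ := fun φ => ∑ j ∈ Finset.range (2*n+1),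
      Q.coeff j * Complex.exp (Complex.I * (((j:ℤ) - (n:ℤ) : ℤ):ℂ) * φ) with hGdef
  have hG : ∀ φ : ℝ, G φ = ((p.eval (Real.sin φ) : ℝ):ℂ) := by
    intro φ
    have h1 : Q.eval (Complex.exp (Complex.I*φ))
        = ∑ j ∈ Finset.range (2*n+1), Q.coeff j * (Complex.exp (Complex.I*φ))^j :=
      Polynomial.eval_eq_sum_range' (by omega) _
    have h2 : G φ = Complex.exp (-(Complex.I*n*φ)) * Q.eval (Complex.exp (Complex.I*φ)) := by
      rw [h1, hGdef, Finset.mul_sum]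
      apply Finset.sum_congr rfl
      intro j hj
      rw [← Complex.exp_nat_mul]
      rw [show Complex.exp (-(Complex.I*(n:ℂ)*(φ:ℂ)))
            * (Q.coeff j * Complex.exp (((j:ℕ):ℂ) * (Complex.I * (φ:ℂ))))
          = Q.coeff j * Complex.exp (-(Complex.I*(n:ℂ)*(φ:ℂ)) + ((j:ℕ):ℂ) * (Complex.I * (φ:ℂ))) by
            rw [Complex.exp_add]; ring]
      congr 2
      push_cast
      ring
    rw [h2, hQeval φ, ← mul_assoc, ← Complex.exp_add]
    simp
  have hGb : ∀ ψ : ℝ, ‖G ψ‖ ≤ 1 := by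
    intro ψ
    rw [hG ψ]
    rw [Complex.norm_real]
    exact hb (Real.sin ψ) ⟨Real.neg_one_le_sin ψ, Real.sin_le_one ψ⟩
  set D : ℝ → ℂ := fun φ => ∑ j ∈ Finset.range (2*n+1),
      Q.coeff j * (Complex.I * (((j:ℤ) - (n:ℤ) : ℤ):ℂ))
        * Complex.exp (Complex.I * (((j:ℤ) - (n:ℤ) : ℤ):ℂ) * φ) with hDdef
  have hD : ∀ φ : ℝ, HasDerivAt G (D φ) φ := by
    intro φ
    apply HasDerivAt.fun_sum
    intro j hj
    set c : ℂ := Complex.I * (((j:ℤ) - (n:ℤ) : ℤ):ℂ) with hc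
    have h1 : HasDerivAt (fun ψ:ℝ => (c * (ψ:ℂ))) c φ := by
      simpa using (Complex.ofRealCLM.hasDerivAt (x := φ)).const_mul c
    have h2 := (h1.cexp).const_mul (Q.coeff j)
    exact h2.congr_deriv (by ring)
  have hRiesz : ∀ φ : ℝ, ∑ k ∈ Icc 1 (2*n), ((-1:ℂ)^(k+1) * (ww n k:ℂ)) * G (φ + tt n k)
      = (((SS n : ℝ):ℂ) / (n:ℂ)) * D φ := by
    intro φ
    calc ∑ k ∈ Icc 1 (2*n), ((-1:ℂ)^(k+1) * (ww n k:ℂ)) * G (φ + tt n k)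
        = ∑ k ∈ Icc 1 (2*n), ∑ j ∈ Finset.range (2*n+1), ((-1:ℂ)^(k+1) * (ww n k:ℂ))
            * (Q.coeff j * Complex.exp (Complex.I * (((j:ℤ) - (n:ℤ) : ℤ):ℂ) * ((φ + tt n k : ℝ):ℂ))) := by
          apply Finset.sum_congr rfl
          intro k hk
          simp only [hGdef]
          rw [Finset.mul_sum]
      _ = ∑ j ∈ Finset.range (2*n+1), ∑ k ∈ Icc 1 (2*n), ((-1:ℂ)^(k+1) * (ww n k:ℂ))
            * (Q.coeff j * Complex.exp (Complex.I * (((j:ℤ) - (n:ℤ) : ℤ):ℂ) * ((φ + tt n k : ℝ):ℂ))) :=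
          Finset.sum_comm
      _ = ∑ j ∈ Finset.range (2*n+1),
            (Q.coeff j * Complex.exp (Complex.I * (((j:ℤ) - (n:ℤ) : ℤ):ℂ) * φ)) * CC n ((j:ℤ) - (n:ℤ)) := by
          apply Finset.sum_congr rfl
          intro j hj
          unfold CC
          rw [Finset.mul_sum]
          apply Finset.sum_congr rfl
          intro k hk
          rw [show Complex.I * (((j:ℤ) - (n:ℤ) : ℤ):ℂ) * ((φ + tt n k : ℝ):ℂ)
              = Complex.I * (((j:ℤ) - (n:ℤ) : ℤ):ℂ) * (φ:ℂ)
                + Complex.I * (((j:ℤ) - (n:ℤ) : ℤ):ℂ) * ((tt n k : ℝ):ℂ) by push_cast; ring]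
          rw [Complex.exp_add]
          ring
      _ = ∑ j ∈ Finset.range (2*n+1),
            (Q.coeff j * Complex.exp (Complex.I * (((j:ℤ) - (n:ℤ) : ℤ):ℂ) * φ))
              * (Complex.I * (((j:ℤ) - (n:ℤ) : ℤ):ℂ) * ((SS n : ℝ):ℂ) / (n:ℂ)) := by
          apply Finset.sum_congr rfl
          intro j hj
          simp only [Finset.mem_range] at hj
          rw [CC_eq n hn ((j:ℤ) - (n:ℤ)) (by rw [abs_le]; omega)]
      _ = (((SS n : ℝ):ℂ) / (n:ℂ)) * D φ := by
          simp only [hDdef]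
          rw [Finset.mul_sum]
          apply Finset.sum_congr rfl
          intro j hj
          ring
  have hnR : (0:ℝ) < n := by exact_mod_cast hn
  have hS := SS_pos n hn
  have hDb : ∀ φ : ℝ, ‖D φ‖ ≤ n := by
    intro φ
    have h := hRiesz φ
    have hSn : (((SS n : ℝ):ℂ) / (n:ℂ)) ≠ 0 := by
      apply div_ne_zero
      · exact_mod_cast ne_of_gt hS
      · exact_mod_cast ne_of_gt hnR
    have hS0 : ((SS n : ℝ):ℂ) ≠ 0 := by exact_mod_cast ne_of_gt hS
    have hn0 : (n:ℂ) ≠ 0 := by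
      simp only [ne_eq, Nat.cast_eq_zero]
      omega
    have hDval : D φ = ((n:ℂ) / ((SS n : ℝ):ℂ))
        * ∑ k ∈ Icc 1 (2*n), ((-1:ℂ)^(k+1) * (ww n k:ℂ)) * G (φ + tt n k) := by
      rw [h]
      field_simp
    rw [hDval]
    rw [norm_mul]
    have hb1 : ‖∑ k ∈ Icc 1 (2*n), ((-1:ℂ)^(k+1) * (ww n k:ℂ)) * G (φ + tt n k)‖ ≤ SS n := by
      apply le_trans (norm_sum_le _ _)
      unfold SS
      apply Finset.sum_le_sum
      intro k hk
      rw [norm_mul, norm_mul, norm_pow]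
      simp only [norm_neg, norm_one, one_pow, one_mul, Complex.norm_real, Real.norm_eq_abs]
      rw [abs_of_pos (ww_pos n k hn hk)]
      calc ww n k * ‖G (φ + tt n k)‖ ≤ ww n k * 1 := by
            apply mul_le_mul_of_nonneg_left (hGb _) (le_of_lt (ww_pos n k hn hk))
        _ = ww n k := mul_one _
    have hnorm1 : ‖((n:ℂ) / ((SS n : ℝ):ℂ))‖ = (n:ℝ) / SS n := by
      rw [norm_div]
      rw [Complex.norm_natCast, Complex.norm_real]
      rw [Real.norm_eq_abs, abs_of_pos hS]
    rw [hnorm1]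
    calc (n:ℝ)/SS n * ‖∑ k ∈ Icc 1 (2*n), ((-1:ℂ)^(k+1) * (ww n k:ℂ)) * G (φ + tt n k)‖
        ≤ (n:ℝ)/SS n * SS n := by
          apply mul_le_mul_of_nonneg_left hb1
          positivity
      _ = n := by field_simp
  intro φ hφ
  have hkey := norm_image_sub_le_of_norm_deriv_le_segment'
    (f := G) (f' := D) (a := 0) (b := φ) (C := n)
    (fun x _ => (hD x).hasDerivWithinAt) (fun x _ => hDb x) φ (Set.right_mem_Icc.mpr hφ)
  rw [hG φ, hG 0, Real.sin_zero] at hkey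
  rw [← Complex.ofReal_sub, Complex.norm_real] at hkey
  simpa using hkey

end Stmt16

end Stmt16Aux

/-- Smoothness of odd bounded polynomials: there is an absolute constant `C` such that for
every odd polynomial `p(x) = x·q(x²)` of degree at most `d` with `|p| ≤ 1` on `[−1,1]`,
one has `|q| ≤ C d` on `[0,1]`. -/
theorem stmt16 : ∃ C : ℝ, 0 < C ∧ ∀ (d : ℕ) (p q : Polynomial ℝ),
    p.natDegree ≤ d → p = Polynomial.X * q.comp (Polynomial.X ^ 2) →
    (∀ x ∈ Set.Icc (-1 : ℝ) 1, |p.eval x| ≤ 1) →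
    ∀ x ∈ Set.Icc (0 : ℝ) 1, |q.eval x| ≤ C * (d : ℝ) := by
  refine ⟨2, by norm_num, ?_⟩
  intro d p q hdeg hpq hb x hx
  rcases eq_or_ne q 0 with rfl | hq
  · simp
  have hX2 : (Polynomial.X^2 : Polynomial ℝ) ≠ 0 := pow_ne_zero _ Polynomial.X_ne_zero
  have hcomp : q.comp (Polynomial.X^2 : Polynomial ℝ) ≠ 0 := by
    intro h
    rw [Polynomial.comp_eq_zero_iff] at h
    rcases h with h | ⟨_, h2⟩
    · exact hq h
    · apply hX2
      rw [h2]
      simp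
  have hn1 : 1 ≤ p.natDegree := by
    rw [hpq, Polynomial.natDegree_mul Polynomial.X_ne_zero hcomp, Polynomial.natDegree_X]
    omega
  have hpn_le : (p.natDegree : ℝ) ≤ (d:ℝ) := by exact_mod_cast hdeg
  have hpeval : ∀ y : ℝ, p.eval y = y * q.eval (y^2) := by
    intro y
    rw [hpq]
    simp [Polynomial.eval_mul, Polynomial.eval_comp]
  have hp00 : p.eval 0 = 0 := by
    rw [hpeval]
    ring
  have key : ∀ t ∈ Set.Ioc (0:ℝ) 1, |q.eval t| ≤ 2 * (d:ℝ) := by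
    intro t ht
    obtain ⟨ht0, ht1⟩ := ht
    set y := Real.sqrt t with hydef
    have hy0 : 0 < y := Real.sqrt_pos.mpr ht0
    have hy1 : y ≤ 1 := Real.sqrt_le_one.mpr ht1
    set φ := Real.arcsin y with hφdef
    have hφ0 : 0 ≤ φ := Real.arcsin_nonneg.mpr hy0.le
    have hφ2 : φ ≤ Real.pi/2 := Real.arcsin_le_pi_div_two y
    have hsin : Real.sin φ = y := Real.sin_arcsin (by linarith) hy1
    have hbern := Stmt16.bern p hn1 hb φ hφ0
    rw [hsin, hp00, sub_zero] at hbern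
    have hsin_lb : 2/Real.pi * φ ≤ Real.sin φ := Real.mul_le_sin hφ0 hφ2
    have ht_eq : y^2 = t := Real.sq_sqrt ht0.le
    have hqx : q.eval t = p.eval y / y := by
      rw [hpeval y, ht_eq]
      field_simp
    rw [hqx, abs_div, abs_of_pos hy0, div_le_iff₀ hy0]
    have hπ := Real.pi_pos
    have hπ4 := Real.pi_le_four
    have hnn : (0:ℝ) ≤ (p.natDegree : ℝ) := by positivity
    calc |p.eval y| ≤ (p.natDegree : ℝ) * φ := hbern
      _ ≤ (p.natDegree : ℝ) * (Real.pi/2 * y) := by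
          apply mul_le_mul_of_nonneg_left _ hnn
          rw [← hsin]
          have hcanc : Real.pi/2 * (2/Real.pi * φ) = φ := by
            field_simp
          have hmul := mul_le_mul_of_nonneg_left hsin_lb
            (by positivity : (0:ℝ) ≤ Real.pi/2)
          linarith [hmul, hcanc]
      _ ≤ (d:ℝ) * (Real.pi/2 * y) :=
          mul_le_mul_of_nonneg_right hpn_le (by positivity)
      _ ≤ 2 * (d:ℝ) * y := by
          nlinarith [mul_nonneg (by positivity : (0:ℝ) ≤ (d:ℝ)) hy0.le, hπ4]
  rcases eq_or_lt_of_le hx.1 with h0 | h0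
  · -- x = 0 : use continuity
    rw [← h0]
    have hcont : Filter.Tendsto (fun s : ℝ => |q.eval s|) (nhdsWithin 0 (Set.Ioi 0))
        (nhds |q.eval 0|) := by
      apply Filter.Tendsto.mono_left _ nhdsWithin_le_nhds
      exact ((Polynomial.continuous q).abs.tendsto 0)
    apply le_of_tendsto hcont
    filter_upwards [Ioc_mem_nhdsGT_of_mem (Set.mem_Ico.mpr ⟨le_refl (0:ℝ), zero_lt_one⟩)] with s hs
    exact key s hs
  · exact key x ⟨h0, hx.2⟩
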